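/- arXiv:2112.05506 — 2 statements merged into one kernel-verified Lean document; each statement's English description precedes it below -/
import Mathlib

section
/- Let A and A' be real symmetric n×n matrices differing only in their k-th row and column. Then for any function f of finite total variation, |∑_{i=1}^n f(λ_i(A)) - ∑_{i=1}^n f(λ_i(A'))| ≤ 2‖f‖_TV, where λ_i denote the eigenvalues. -/
open Finset Matrix

namespace BCC

def TVset (f : ℝ → ℝ) : Set ℝ :=
  {s : ℝ | ∃ (p : ℕ) (x : Fin (p + 1) → ℝ), StrictMono x ∧
      s = ∑ i : Fin p, |f (x i.succ) - f (x i.castSucc)|}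

lemma V_nonneg {f : ℝ → ℝ} {V : ℝ} (hV : IsLUB (TVset f) V) : 0 ≤ V := by
  apply hV.1
  refine ⟨0, fun _ => 0, ?_, by simp⟩
  intro i j h
  rw [Fin.lt_def] at h
  have hi := i.isLt
  have hj := j.isLt
  omega

lemma chain_le {f : ℝ → ℝ} {V : ℝ} (hV : IsLUB (TVset f) V) :
    ∀ (p : ℕ) (x : ℕ → ℝ), (∀ i, i + 1 ≤ p → x i ≤ x (i + 1)) →
      ∑ i ∈ Finset.range p, |f (x (i + 1)) - f (x i)| ≤ V := by
  intro p
  induction p with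
  | zero => intro x _; simpa using V_nonneg hV
  | succ p ih =>
    intro x hx
    by_cases hdup : ∃ j, j + 1 ≤ p + 1 ∧ x j = x (j + 1)
    · obtain ⟨j, hj, hxj⟩ := hdup
      have hjp : j ≤ p := by omega
      set y : ℕ → ℝ := fun i => if i ≤ j then x i else x (i + 1) with hy
      have hmono : ∀ i, i + 1 ≤ p → y i ≤ y (i + 1) := by
        intro i hi
        rcases lt_trichotomy i j with h | h | h
        · simp only [hy]
          rw [if_pos (by omega), if_pos (by omega)]
          exact hx i (by omega)
        · simp only [hy]
          rw [if_pos (by omega), if_neg (by omega)]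
          subst h
          rw [hxj]
          exact hx (i + 1) (by omega)
        · simp only [hy]
          rw [if_neg (by omega), if_neg (by omega)]
          exact hx (i + 1) (by omega)
      have hTj : |f (x (j + 1)) - f (x j)| = 0 := by rw [hxj]; simp
      have hsum : ∑ i ∈ Finset.range (p + 1), |f (x (i + 1)) - f (x i)|
          = ∑ i ∈ Finset.range p, |f (y (i + 1)) - f (y i)| := by
        have e1 : ∀ i, i < j → |f (y (i + 1)) - f (y i)| = |f (x (i + 1)) - f (x i)| := by
          intro i hi
          simp only [hy]
          rw [if_pos (by omega), if_pos (by omega)]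
        have e2 : ∀ i, j ≤ i → |f (y (i + 1)) - f (y i)| = |f (x (i + 2)) - f (x (i + 1))| := by
          intro i hi
          rcases eq_or_lt_of_le hi with h | h
          · simp only [hy]
            rw [if_neg (by omega), if_pos (by omega), ← h, hxj]
          · simp only [hy]
            rw [if_neg (by omega), if_neg (by omega)]
        rw [Finset.range_eq_Ico, Finset.range_eq_Ico,
          ← Finset.sum_Ico_consecutive _ (Nat.zero_le j) (by omega : j ≤ p + 1),
          ← Finset.sum_Ico_consecutive _ (Nat.zero_le j) (by omega : j ≤ p),
          Finset.sum_eq_sum_Ico_succ_bot (by omega : j < p + 1), hTj, zero_add]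
        congr 1
        · exact Finset.sum_congr rfl fun i hi => (e1 i (Finset.mem_Ico.1 hi).2).symm
        · rw [Finset.sum_Ico_eq_sum_range, Finset.sum_Ico_eq_sum_range]
          have : p + 1 - (j + 1) = p - j := by omega
          rw [this]
          refine Finset.sum_congr rfl fun i hi => ?_
          rw [e2 (j + i) (by omega), show j + i + 2 = j + 1 + i + 1 by omega,
            show j + i + 1 = j + 1 + i by omega]
      rw [hsum]
      exact ih y hmono
    · push_neg at hdup
      have hstrict : StrictMono (fun i : Fin (p + 2) => x i) := by
        rw [Fin.strictMono_iff_lt_succ]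
        intro i
        have h1 := hx i (by omega)
        have h2 := hdup i (by omega)
        simp only [Fin.coe_castSucc, Fin.val_succ]
        exact lt_of_le_of_ne h1 h2
      apply hV.1
      refine ⟨p + 1, fun i : Fin (p + 2) => x i, hstrict, ?_⟩
      rw [← Fin.sum_univ_eq_sum_range (fun i => |f (x (i + 1)) - f (x i)|) (p + 1)]
      exact Finset.sum_congr rfl fun i _ => by simp

lemma pair_sum_le {f : ℝ → ℝ} {V : ℝ} (hV : IsLUB (TVset f) V) (m : ℕ)
    (d c : ℕ → ℝ) (hdc : ∀ i, i + 1 ≤ m → d i ≤ c i)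
    (hcd : ∀ i, i + 2 ≤ m → c i ≤ d (i + 1)) :
    ∑ i ∈ Finset.range m, |f (c i) - f (d i)| ≤ V := by
  rcases Nat.eq_zero_or_pos m with rfl | hm
  · simpa using V_nonneg hV
  set x : ℕ → ℝ := fun j => if j % 2 = 0 then d (j / 2) else c (j / 2) with hxdef
  have hx : ∀ i, i + 1 ≤ 2 * m - 1 → x i ≤ x (i + 1) := by
    intro i hi
    rcases Nat.even_or_odd i with ⟨l, hl⟩ | ⟨l, hl⟩
    · have h1 : i % 2 = 0 := by omega
      have h2 : (i + 1) % 2 = 1 := by omega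
      have h3 : i / 2 = l := by omega
      have h4 : (i + 1) / 2 = l := by omega
      simp only [hxdef, h1, h2, h3, h4]
      norm_num
      exact hdc l (by omega)
    · have h1 : i % 2 = 1 := by omega
      have h2 : (i + 1) % 2 = 0 := by omega
      have h3 : i / 2 = l := by omega
      have h4 : (i + 1) / 2 = l + 1 := by omega
      simp only [hxdef, h1, h2, h3, h4]
      norm_num
      exact hcd l (by omega)
  have hchain := chain_le hV (2 * m - 1) x hx
  refine le_trans ?_ hchain
  have hterm : ∀ i, i < m → |f (c i) - f (d i)| = |f (x (2 * i + 1)) - f (x (2 * i))| := by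
    intro i _
    have h1 : (2 * i) % 2 = 0 := by omega
    have h2 : (2 * i + 1) % 2 = 1 := by omega
    have h3 : (2 * i) / 2 = i := by omega
    have h4 : (2 * i + 1) / 2 = i := by omega
    simp only [hxdef, h1, h2, h3, h4]
    norm_num
  rw [Finset.sum_congr rfl fun i hi => hterm i (Finset.mem_range.1 hi)]
  have hinj : Set.InjOn (fun i => 2 * i) ↑(Finset.range m) := fun a _ b _ h => by have : 2 * a = 2 * b := h; omega
  rw [show (∑ i ∈ Finset.range m, |f (x (2 * i + 1)) - f (x (2 * i))|)
      = ∑ j ∈ (Finset.range m).image (fun i => 2 * i), |f (x (j + 1)) - f (x j)| by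
    rw [Finset.sum_image (fun a ha b hb h => hinj ha hb h)]]
  apply Finset.sum_le_sum_of_subset_of_nonneg
  · intro j hj
    simp only [Finset.mem_image, Finset.mem_range] at hj ⊢
    obtain ⟨i, hi, rfl⟩ := hj
    show 2 * i < 2 * m - 1
    omega
  · intro j _ _
    exact abs_nonneg _

variable {n : ℕ}

lemma dot_sum_right {ι : Type*} [Fintype ι] (u : Fin n → ℝ) (g : ι → ℝ)
    (w : ι → Fin n → ℝ) :
    u ⬝ᵥ (∑ j, g j • w j) = ∑ j, g j * (u ⬝ᵥ w j) := by
  simp only [dotProduct, Finset.sum_apply, Pi.smul_apply, smul_eq_mul, Finset.mul_sum]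
  rw [Finset.sum_comm]
  exact Finset.sum_congr rfl fun j _ => Finset.sum_congr rfl fun l _ => by ring

lemma sum_dot_right {ι : Type*} [Fintype ι] (g : ι → ℝ) (w : ι → Fin n → ℝ)
    (u : Fin n → ℝ) :
    (∑ j, g j • w j) ⬝ᵥ u = ∑ j, g j * (w j ⬝ᵥ u) := by
  simp only [dotProduct, Finset.sum_apply, Pi.smul_apply, smul_eq_mul,
    Finset.sum_mul, Finset.mul_sum]
  rw [Finset.sum_comm]
  exact Finset.sum_congr rfl fun j _ => Finset.sum_congr rfl fun l _ => by ring

lemma dot_on_sums {ι : Type*} [Fintype ι] [DecidableEq ι]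
    (w : ι → Fin n → ℝ) (hw : ∀ i j, w i ⬝ᵥ w j = if i = j then (1 : ℝ) else 0)
    (a b : ι → ℝ) :
    (∑ i, a i • w i) ⬝ᵥ (∑ j, b j • w j) = ∑ i, a i * b i := by
  rw [sum_dot_right]
  refine Finset.sum_congr rfl fun i _ => ?_
  rw [dot_sum_right]
  simp [hw, Finset.sum_ite_eq' Finset.univ i (fun j => b j * 1)]

lemma li_of_dot {ι : Type*} [Fintype ι] [DecidableEq ι]
    (w : ι → Fin n → ℝ) (hw : ∀ i j, w i ⬝ᵥ w j = if i = j then (1 : ℝ) else 0) :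
    LinearIndependent ℝ w := by
  rw [Fintype.linearIndependent_iff]
  intro g hg i
  have h := congrArg (fun z => w i ⬝ᵥ z) hg
  rw [dot_sum_right] at h
  simp [hw] at h
  exact h

lemma norm_eval {ι : Type*} [Fintype ι] [DecidableEq ι]
    (w : ι → Fin n → ℝ) (hw : ∀ i j, w i ⬝ᵥ w j = if i = j then (1 : ℝ) else 0)
    (c : ι → ℝ) : (∑ i, c i • w i) ⬝ᵥ (∑ i, c i • w i) = ∑ i, c i ^ 2 := by
  rw [dot_on_sums w hw]
  exact Finset.sum_congr rfl fun i _ => by ring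

lemma form_eval {ι : Type*} [Fintype ι] [DecidableEq ι] (B : Matrix (Fin n) (Fin n) ℝ)
    (w : ι → Fin n → ℝ) (μ : ι → ℝ)
    (hw : ∀ i j, w i ⬝ᵥ w j = if i = j then (1 : ℝ) else 0)
    (hBw : ∀ i, B *ᵥ w i = μ i • w i) (c : ι → ℝ) :
    (∑ i, c i • w i) ⬝ᵥ (B *ᵥ ∑ i, c i • w i) = ∑ i, μ i * c i ^ 2 := by
  have hlin : B *ᵥ (∑ i, c i • w i) = ∑ i, (c i * μ i) • w i := by
    have h1 : B *ᵥ (∑ i, c i • w i) = ∑ i, c i • (B *ᵥ w i) := by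
      rw [← Matrix.mulVecLin_apply, map_sum]
      exact Finset.sum_congr rfl fun i _ => by
        rw [_root_.map_smul, Matrix.mulVecLin_apply]
    rw [h1]
    exact Finset.sum_congr rfl fun i _ => by rw [hBw i, smul_smul]
  rw [hlin, dot_on_sums w hw]
  exact Finset.sum_congr rfl fun i _ => by ring



lemma eig_dot {n : ℕ} {A : Matrix (Fin n) (Fin n) ℝ} (hA : A.IsHermitian) (i j : Fin n) :
    (⇑(hA.eigenvectorBasis i) : Fin n → ℝ) ⬝ᵥ ⇑(hA.eigenvectorBasis j)
      = if i = j then (1 : ℝ) else 0 := by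
  have h := orthonormal_iff_ite.mp hA.eigenvectorBasis.orthonormal i j
  simpa [PiLp.inner_apply, RCLike.inner_apply, starRingEnd_apply, dotProduct, mul_comm] using h



lemma count_le (n : ℕ) (k : Fin n) (A A' : Matrix (Fin n) (Fin n) ℝ)
    (hA : A.IsHermitian) (hA' : A'.IsHermitian)
    (hdiff : ∀ i j : Fin n, i ≠ k → j ≠ k → A i j = A' i j) (t : ℝ) :
    (Finset.univ.filter fun i => hA'.eigenvalues i ≤ t).card ≤
      (Finset.univ.filter fun i => hA.eigenvalues i ≤ t).card + 1 := by
  classical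
  by_contra hcon
  push_neg at hcon
  set lam := hA.eigenvalues with hlam
  set lam' := hA'.eigenvalues with hlam'
  set v : Fin n → Fin n → ℝ := fun i => ⇑(hA.eigenvectorBasis i) with hv
  set v' : Fin n → Fin n → ℝ := fun i => ⇑(hA'.eigenvectorBasis i) with hv'
  have hvdot : ∀ i j, v i ⬝ᵥ v j = if i = j then (1 : ℝ) else 0 := eig_dot hA
  have hv'dot : ∀ i j, v' i ⬝ᵥ v' j = if i = j then (1 : ℝ) else 0 := eig_dot hA'
  have hAv : ∀ j, A *ᵥ v j = lam j • v j := fun j => hA.mulVec_eigenvectorBasis j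
  have hA'v : ∀ j, A' *ᵥ v' j = lam' j • v' j := fun j => hA'.mulVec_eigenvectorBasis j
  set S : Finset (Fin n) := Finset.univ.filter (fun i => lam' i ≤ t) with hS
  set T : Finset (Fin n) := Finset.univ.filter (fun i => ¬ lam i ≤ t) with hT
  set m : ℕ := (Finset.univ.filter fun i => lam i ≤ t).card with hm
  have hTcard : m + T.card = n := by
    rw [hm, hT]
    rw [Finset.card_filter_add_card_filter_not]
    exact (Finset.card_univ).trans (Fintype.card_fin n)
  -- subfamily dot products
  have hwS : ∀ i j : {i // i ∈ S}, v' i.1 ⬝ᵥ v' j.1 = if i = j then (1 : ℝ) else 0 := by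
    intro i j
    rw [hv'dot i.1 j.1]
    exact if_congr Subtype.coe_inj rfl rfl
  have hwT : ∀ i j : {i // i ∈ T}, v i.1 ⬝ᵥ v j.1 = if i = j then (1 : ℝ) else 0 := by
    intro i j
    rw [hvdot i.1 j.1]
    exact if_congr Subtype.coe_inj rfl rfl
  set U : Submodule ℝ (Fin n → ℝ) :=
    Submodule.span ℝ (Set.range fun i : {i // i ∈ S} => v' i.1) with hU
  set W : Submodule ℝ (Fin n → ℝ) :=
    Submodule.span ℝ (Set.range fun i : {i // i ∈ T} => v i.1) with hW
  set K : Submodule ℝ (Fin n → ℝ) :=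
    LinearMap.ker (LinearMap.proj k : (Fin n → ℝ) →ₗ[ℝ] ℝ) with hK
  have hdim : Module.finrank ℝ (Fin n → ℝ) = n := by
    rw [Module.finrank_fintype_fun_eq_card, Fintype.card_fin]
  have hUrank : Module.finrank ℝ U = S.card := by
    rw [hU, finrank_span_eq_card (li_of_dot _ hwS), Fintype.card_coe]
  have hWrank : Module.finrank ℝ W = T.card := by
    rw [hW, finrank_span_eq_card (li_of_dot _ hwT), Fintype.card_coe]
  have hKrank : n - 1 ≤ Module.finrank ℝ K := by
    rw [hK]
    have h1 := LinearMap.finrank_range_add_finrank_ker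
      (LinearMap.proj k : (Fin n → ℝ) →ₗ[ℝ] ℝ)
    have h2 : Module.finrank ℝ
        (LinearMap.range (LinearMap.proj k : (Fin n → ℝ) →ₗ[ℝ] ℝ)) ≤ 1 := by
      have h3 := Submodule.finrank_le
        (LinearMap.range (LinearMap.proj k : (Fin n → ℝ) →ₗ[ℝ] ℝ))
      simpa using h3
    rw [hdim] at h1
    omega
  have hUW := Submodule.finrank_sup_add_finrank_inf_eq U W
  have hUWK := Submodule.finrank_sup_add_finrank_inf_eq (U ⊓ W) K
  have hle1 : Module.finrank ℝ ↥(U ⊔ W) ≤ n := le_trans (Submodule.finrank_le _) (le_of_eq hdim)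
  have hle2 : Module.finrank ℝ ↥((U ⊓ W) ⊔ K) ≤ n := le_trans (Submodule.finrank_le _) (le_of_eq hdim)
  have hpos : 0 < Module.finrank ℝ ↥(U ⊓ W ⊓ K) := by omega
  haveI := Module.nontrivial_of_finrank_pos hpos
  obtain ⟨y, hy⟩ := exists_ne (0 : ↥(U ⊓ W ⊓ K))
  set x : Fin n → ℝ := (y : Fin n → ℝ) with hx
  have hxne : x ≠ 0 := fun h => hy (Subtype.ext h)
  obtain ⟨hxUW, hxK⟩ := Submodule.mem_inf.mp y.2
  obtain ⟨hxU, hxW⟩ := Submodule.mem_inf.mp hxUW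
  have hxk : x k = 0 := LinearMap.mem_ker.mp hxK
  -- representation in U
  obtain ⟨c, hc⟩ := (Submodule.mem_span_range_iff_exists_fun ℝ).mp
    (show x ∈ Submodule.span ℝ (Set.range fun i : {i // i ∈ S} => v' i.1) from hxU)
  obtain ⟨e, he⟩ := (Submodule.mem_span_range_iff_exists_fun ℝ).mp
    (show x ∈ Submodule.span ℝ (Set.range fun i : {i // i ∈ T} => v i.1) from hxW)
  -- upper bound for A'
  have hupper : x ⬝ᵥ (A' *ᵥ x) ≤ t * (x ⬝ᵥ x) := by
    rw [← hc, form_eval A' _ (fun i : {i // i ∈ S} => lam' i.1) hwS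
        (fun i => hA'v i.1), norm_eval _ hwS, Finset.mul_sum]
    refine Finset.sum_le_sum fun i _ => ?_
    have hi : lam' i.1 ≤ t := (Finset.mem_filter.mp i.2).2
    exact mul_le_mul_of_nonneg_right hi (sq_nonneg _)
  -- lower bound for A
  have hlower : t * (x ⬝ᵥ x) < x ⬝ᵥ (A *ᵥ x) := by
    rw [← he, form_eval A _ (fun i : {i // i ∈ T} => lam i.1) hwT
        (fun i => hAv i.1), norm_eval _ hwT, Finset.mul_sum]
    have hex : ∃ i0 : {i // i ∈ T}, e i0 ≠ 0 := by
      by_contra hall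
      push_neg at hall
      apply hxne
      rw [← he]
      simp [hall]
    obtain ⟨i0, hi0⟩ := hex
    refine Finset.sum_lt_sum (fun i _ => ?_) ⟨i0, Finset.mem_univ _, ?_⟩
    · have hi : t < lam i.1 := by
        have := (Finset.mem_filter.mp i.2).2
        exact lt_of_not_ge this
      exact mul_le_mul_of_nonneg_right hi.le (sq_nonneg _)
    · have hi : t < lam i0.1 := by
        have := (Finset.mem_filter.mp i0.2).2
        exact lt_of_not_ge this
      have hsq : 0 < e i0 ^ 2 :=
        lt_of_le_of_ne (sq_nonneg _) (Ne.symm (pow_ne_zero 2 hi0))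
      exact mul_lt_mul_of_pos_right hi hsq
  -- the two quadratic forms agree
  have hforms : x ⬝ᵥ (A *ᵥ x) = x ⬝ᵥ (A' *ᵥ x) := by
    simp only [dotProduct, Matrix.mulVec]
    refine Finset.sum_congr rfl fun i _ => ?_
    by_cases hi : i = k
    · rw [hi, hxk]; ring
    · congr 1
      refine Finset.sum_congr rfl fun j _ => ?_
      by_cases hj : j = k
      · rw [hj, hxk]; ring
      · rw [hdiff i j hi hj]
  -- contradiction
  have hScard : m + 1 < S.card := hcon
  linarith

lemma card_filter_comp_perm {n : ℕ} (σ : Equiv.Perm (Fin n)) (p : Fin n → Prop)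
    [DecidablePred p] :
    (Finset.univ.filter fun i => p (σ i)).card = (Finset.univ.filter p).card := by
  apply Finset.card_bij' (fun i _ => σ i) (fun j _ => σ.symm j)
  · intro i hi
    simp only [Finset.mem_filter, Finset.mem_univ, true_and] at hi ⊢
    exact hi
  · intro j hj
    simp only [Finset.mem_filter, Finset.mem_univ, true_and] at hj ⊢
    simpa using hj
  · intro i _; simp
  · intro j _; simp

lemma sorted_le {n : ℕ} (a b : Fin n → ℝ) (ha : Monotone a) (hb : Monotone b)
    (hcount : ∀ t : ℝ, (Finset.univ.filter fun l => b l ≤ t).card ≤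
      (Finset.univ.filter fun l => a l ≤ t).card + 1)
    (i j : Fin n) (hij : (i : ℕ) + 1 ≤ (j : ℕ)) : a i ≤ b j := by
  by_contra h
  push_neg at h
  have h1 : (j : ℕ) + 1 ≤ (Finset.univ.filter fun l => b l ≤ b j).card := by
    have hsub : Finset.Iic j ⊆ Finset.univ.filter fun l => b l ≤ b j := by
      intro l hl
      exact Finset.mem_filter.2 ⟨Finset.mem_univ _, hb (Finset.mem_Iic.1 hl)⟩
    calc (j : ℕ) + 1 = (Finset.Iic j).card := (Fin.card_Iic j).symm
      _ ≤ _ := Finset.card_le_card hsub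
  have h2 : (Finset.univ.filter fun l => a l ≤ b j).card ≤ (i : ℕ) := by
    have hsub : (Finset.univ.filter fun l => a l ≤ b j) ⊆ Finset.Iio i := by
      intro l hl
      have hl' := (Finset.mem_filter.1 hl).2
      rw [Finset.mem_Iio]
      by_contra hli
      push_neg at hli
      exact absurd (le_trans (ha hli) hl') (not_le.2 h)
    calc (Finset.univ.filter fun l => a l ≤ b j).card ≤ (Finset.Iio i).card :=
        Finset.card_le_card hsub
      _ = (i : ℕ) := Fin.card_Iio i
  have := hcount (b j)
  omega


theorem main_aux
    (n : ℕ) (k : Fin n)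
    (A A' : Matrix (Fin n) (Fin n) ℝ)
    (hA : A.IsHermitian) (hA' : A'.IsHermitian)
    (hdiff : ∀ i j : Fin n, i ≠ k → j ≠ k → A i j = A' i j)
    (f : ℝ → ℝ) (V : ℝ)
    (hV : IsLUB {s : ℝ | ∃ (p : ℕ) (x : Fin (p + 1) → ℝ), StrictMono x ∧
        s = ∑ i : Fin p, |f (x i.succ) - f (x i.castSucc)|} V) :
    |∑ i, f (hA.eigenvalues i) - ∑ i, f (hA'.eigenvalues i)| ≤ 2 * V := by
  classical
  have hV' : IsLUB (TVset f) V := hV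
  have hcount1' := fun t => count_le n k A A' hA hA' hdiff t
  have hdiff' : ∀ i j : Fin n, i ≠ k → j ≠ k → A' i j = A i j :=
    fun i j hi hj => (hdiff i j hi hj).symm
  have hcount2' := fun t => count_le n k A' A hA' hA hdiff' t
  set lam := hA.eigenvalues with hlam
  set lam' := hA'.eigenvalues with hlam'
  set σ := Tuple.sort lam with hσ
  set τ := Tuple.sort lam' with hτ
  set a : Fin n → ℝ := lam ∘ σ with haa
  set b : Fin n → ℝ := lam' ∘ τ with hbb
  have ha : Monotone a := Tuple.monotone_sort lam
  have hb : Monotone b := Tuple.monotone_sort lam'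
  have hcount1 : ∀ t : ℝ, (Finset.univ.filter fun l => b l ≤ t).card ≤
      (Finset.univ.filter fun l => a l ≤ t).card + 1 := by
    intro t
    have e1 : (Finset.univ.filter fun l => b l ≤ t).card
        = (Finset.univ.filter fun l => lam' l ≤ t).card :=
      card_filter_comp_perm τ (fun i => lam' i ≤ t)
    have e2 : (Finset.univ.filter fun l => a l ≤ t).card
        = (Finset.univ.filter fun l => lam l ≤ t).card :=
      card_filter_comp_perm σ (fun i => lam i ≤ t)
    rw [e1, e2]
    exact hcount1' t
  have hcount2 : ∀ t : ℝ, (Finset.univ.filter fun l => a l ≤ t).card ≤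
      (Finset.univ.filter fun l => b l ≤ t).card + 1 := by
    intro t
    have e1 : (Finset.univ.filter fun l => b l ≤ t).card
        = (Finset.univ.filter fun l => lam' l ≤ t).card :=
      card_filter_comp_perm τ (fun i => lam' i ≤ t)
    have e2 : (Finset.univ.filter fun l => a l ≤ t).card
        = (Finset.univ.filter fun l => lam l ≤ t).card :=
      card_filter_comp_perm σ (fun i => lam i ≤ t)
    rw [e1, e2]
    exact hcount2' t
  have hab : ∀ i j : Fin n, (i : ℕ) + 1 ≤ (j : ℕ) → a i ≤ b j :=
    sorted_le a b ha hb hcount1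
  have hba : ∀ i j : Fin n, (i : ℕ) + 1 ≤ (j : ℕ) → b i ≤ a j :=
    sorted_le b a hb ha hcount2
  set d : ℕ → ℝ := fun i => if h : i < n then min (a ⟨i, h⟩) (b ⟨i, h⟩) else 0 with hd
  set c : ℕ → ℝ := fun i => if h : i < n then max (a ⟨i, h⟩) (b ⟨i, h⟩) else 0 with hc
  have hdc : ∀ i, i + 1 ≤ n → d i ≤ c i := by
    intro i hi
    rw [hd, hc]
    simp only [dif_pos (show i < n by omega)]
    exact min_le_max
  have hcd : ∀ i, i + 2 ≤ n → c i ≤ d (i + 1) := by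
    intro i hi
    rw [hd, hc]
    simp only [dif_pos (show i < n by omega), dif_pos (show i + 1 < n by omega)]
    have hle : (⟨i, by omega⟩ : Fin n) ≤ ⟨i + 1, by omega⟩ := by
      rw [Fin.mk_le_mk]; omega
    refine max_le (le_min (ha hle) (hab ⟨i, by omega⟩ ⟨i + 1, by omega⟩ (by simp)))
      (le_min (hba ⟨i, by omega⟩ ⟨i + 1, by omega⟩ (by simp)) (hb hle))
  have hsum := pair_sum_le hV' n d c hdc hcd
  have hsa : ∑ i, f (lam i) = ∑ i, f (a i) :=
    (Equiv.sum_comp σ (fun i => f (lam i))).symm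
  have hsb : ∑ i, f (lam' i) = ∑ i, f (b i) :=
    (Equiv.sum_comp τ (fun i => f (lam' i))).symm
  rw [hsa, hsb]
  have habs : |∑ i, f (a i) - ∑ i, f (b i)| ≤ V := by
    rw [← Finset.sum_sub_distrib]
    refine le_trans (Finset.abs_sum_le_sum_abs _ _) (le_trans (le_of_eq ?_) hsum)
    rw [← Fin.sum_univ_eq_sum_range (fun i => |f (c i) - f (d i)|) n]
    refine Finset.sum_congr rfl fun i _ => ?_
    rw [hd, hc]
    simp only [dif_pos i.isLt, Fin.eta]
    rcases le_total (a i) (b i) with h | h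
    · rw [min_eq_left h, max_eq_right h, abs_sub_comm]
    · rw [min_eq_right h, max_eq_left h]
  have h0 := V_nonneg hV'
  linarith

end BCC

/-- If the real symmetric matrices `A` and `A'` differ only in their `k`-th row
and column, then for any `f` of finite total variation `V`,
`|∑ f(λ_i(A)) - ∑ f(λ_i(A'))| ≤ 2 V`. -/
theorem eigenvalue_sum_row_column_perturbation
    (n : ℕ) (k : Fin n)
    (A A' : Matrix (Fin n) (Fin n) ℝ)
    (hA : A.IsHermitian) (hA' : A'.IsHermitian)
    (hdiff : ∀ i j : Fin n, i ≠ k → j ≠ k → A i j = A' i j)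
    (f : ℝ → ℝ) (V : ℝ)
    (hV : IsLUB {s : ℝ | ∃ (p : ℕ) (x : Fin (p + 1) → ℝ), StrictMono x ∧
        s = ∑ i : Fin p, |f (x i.succ) - f (x i.castSucc)|} V) :
    |∑ i, f (hA.eigenvalues i) - ∑ i, f (hA'.eigenvalues i)| ≤ 2 * V :=
  BCC.main_aux n k A A' hA hA' hdiff f V hV
end

section
/- Let v be a unit eigenvector of a real symmetric n×n matrix X with eigenvalue E that is not an eigenvalue of the principal minor X^{(1)}. Then the first coordinate of v satisfies v_1² = (1 + ⟨X_1, (E - X^{(1)})^{-2} X_1⟩)^{-1}, where X_1 is the first column of X with the first entry removed and X^{(1)} is the principal minor obtained by removing the first row and column. -/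
open Matrix

/-- Formula for the first coordinate of a unit eigenvector: if `X v = E v` with
`‖v‖ = 1` and `E` is not an eigenvalue of the principal minor `X⁽¹⁾`, then
`v₁² = (1 + ⟨X_1, (E - X⁽¹⁾)⁻² X_1⟩)⁻¹`. -/
theorem eigenvector_first_coordinate
    (n : ℕ) (X : Matrix (Fin (n+1)) (Fin (n+1)) ℝ)
    (hX : X.IsHermitian)
    (v : Fin (n+1) → ℝ) (E : ℝ)
    (hv : X.mulVec v = E • v)
    (hnorm : ∑ i, (v i) ^ 2 = 1)
    (hE : (E • (1 : Matrix (Fin n) (Fin n) ℝ)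
        - X.submatrix Fin.succ Fin.succ).det ≠ 0) :
    (v 0) ^ 2
      = (1 + dotProduct (fun i : Fin n => X (Fin.succ i) 0)
          ((((E • (1 : Matrix (Fin n) (Fin n) ℝ)
              - X.submatrix Fin.succ Fin.succ)⁻¹) ^ 2).mulVec
            (fun i : Fin n => X (Fin.succ i) 0)))⁻¹ := by
  set A : Matrix (Fin n) (Fin n) ℝ :=
    E • (1 : Matrix (Fin n) (Fin n) ℝ) - X.submatrix Fin.succ Fin.succ with hAdef
  set X₁ : Fin n → ℝ := fun i => X (Fin.succ i) 0 with hX₁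
  set w : Fin n → ℝ := fun i => v (Fin.succ i) with hw
  have hAu : IsUnit A.det := isUnit_iff_ne_zero.mpr hE
  have hXs : Xᵀ = X := by
    have := hX.eq
    simpa [Matrix.conjTranspose_eq_transpose_of_trivial] using this
  have hAsymm : Aᵀ = A := by
    rw [hAdef, transpose_sub, transpose_smul, transpose_one, transpose_submatrix, hXs]
  have key : A.mulVec w = v 0 • X₁ := by
    funext i
    have h := congrFun hv (Fin.succ i)
    simp only [mulVec, dotProduct, Fin.sum_univ_succ, Pi.smul_apply, smul_eq_mul] at h
    simp only [mulVec, dotProduct, Pi.smul_apply, smul_eq_mul]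
    have hlhs : ∑ x, A i x * w x
        = E * w i - ∑ x, X (Fin.succ i) (Fin.succ x) * w x := by
      simp [hAdef, Matrix.sub_apply, Matrix.smul_apply, Matrix.one_apply, sub_mul,
        Finset.sum_sub_distrib, ite_mul, smul_eq_mul, Matrix.submatrix_apply]
    rw [hlhs]
    simp only [hw, hX₁]
    linarith
  have hBA : A⁻¹ * A = 1 := nonsing_inv_mul A hAu
  have hwin : w = v 0 • A⁻¹.mulVec X₁ := by
    have h2 : A⁻¹.mulVec (A.mulVec w) = A⁻¹.mulVec (v 0 • X₁) := by rw [key]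
    rwa [mulVec_mulVec, hBA, one_mulVec, mulVec_smul] at h2
  have hBsym : A⁻¹ᵀ = A⁻¹ := by rw [transpose_nonsing_inv, hAsymm]
  have hdp : w ⬝ᵥ w = v 0 ^ 2 * (X₁ ⬝ᵥ ((A⁻¹ ^ 2).mulVec X₁)) := by
    rw [hwin]
    have hsq : (A⁻¹ ^ 2).mulVec X₁ = A⁻¹.mulVec (A⁻¹.mulVec X₁) := by
      rw [sq, ← mulVec_mulVec]
    rw [hsq, smul_dotProduct, dotProduct_smul, smul_eq_mul, smul_eq_mul, ← mul_assoc, ← sq]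
    congr 1
    rw [dotProduct_mulVec X₁ A⁻¹, ← mulVec_transpose, hBsym]
  have hnorm' : v 0 ^ 2 + w ⬝ᵥ w = 1 := by
    rw [Fin.sum_univ_succ] at hnorm
    simpa [dotProduct, sq, hw] using hnorm
  have hv0 : v 0 ≠ 0 := by
    intro h0
    rw [hwin, h0, zero_smul] at hnorm'
    simp at hnorm'
  have hmain : v 0 ^ 2 * (1 + X₁ ⬝ᵥ ((A⁻¹ ^ 2).mulVec X₁)) = 1 := by
    nlinarith [hnorm', hdp]
  exact eq_inv_of_mul_eq_one_left hmain
end
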